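/- Assume moreover that Δ is crystallographic: 2⟨β, α⟩/⟨α, α⟩ ∈ ℤ for all α, β ∈ Δ. If α₁, α₂ ∈ Δ satisfy π_A(α₁) = π_A(α₂) ≠ 0, then there exist an integer ℓ ≥ 0 and roots γ₁, …, γ_ℓ ∈ Δ with ⟨γ_i, H₀⟩ = 0 for all i (i.e. γ_i ∈ Δ⁰) such that α₁ + γ₁ + ⋯ + γ_r ∈ Δ for every 1 ≤ r ≤ ℓ and α₁ + γ₁ + ⋯ + γ_ℓ = α₂. -/

import Mathlib

open RealInnerProductSpace Finset

private def GoodChain {V : Type*} [NormedAddCommGroup V] [InnerProductSpace ℝ V]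
    (Δ : Finset V) (H₀ a b : V) : Prop :=
  ∃ (ℓ : ℕ) (γ : ℕ → V),
    (∀ i < ℓ, γ i ∈ Δ ∧ ⟪γ i, H₀⟫ = 0) ∧
    (∀ r : ℕ, 1 ≤ r → r ≤ ℓ → a + ∑ i ∈ Finset.range r, γ i ∈ Δ) ∧
    a + ∑ i ∈ Finset.range ℓ, γ i = b

private lemma gc_refl {V : Type*} [NormedAddCommGroup V] [InnerProductSpace ℝ V]
    (Δ : Finset V) (H₀ a : V) : GoodChain Δ H₀ a a :=
  ⟨0, fun _ => 0, by omega, by omega, by simp⟩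

private lemma gc_step {V : Type*} [NormedAddCommGroup V] [InnerProductSpace ℝ V]
    {Δ : Finset V} {H₀ a b g : V} (h : GoodChain Δ H₀ a b) (hg : g ∈ Δ)
    (hg0 : ⟪g, H₀⟫ = 0) (hbg : b + g ∈ Δ) : GoodChain Δ H₀ a (b + g) := by
  obtain ⟨ℓ, γ, h1, h2, h3⟩ := h
  refine ⟨ℓ + 1, fun i => if i < ℓ then γ i else g, ?_, ?_, ?_⟩
  · intro i hi
    by_cases h : i < ℓ
    · simpa [h] using h1 i h
    · simp [h, hg, hg0]
  · intro r hr1 hr2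
    rcases Nat.lt_or_ge r (ℓ + 1) with h | h
    · have hrl : r ≤ ℓ := by omega
      have : ∑ i ∈ Finset.range r, (if i < ℓ then γ i else g) = ∑ i ∈ Finset.range r, γ i := by
        refine Finset.sum_congr rfl fun i hi => ?_
        have : i < ℓ := by have := Finset.mem_range.mp hi; omega
        simp [this]
      rw [this]
      exact h2 r hr1 hrl
    · have hr : r = ℓ + 1 := by omega
      subst hr
      rw [Finset.sum_range_succ]
      have : ∑ i ∈ Finset.range ℓ, (if i < ℓ then γ i else g) = ∑ i ∈ Finset.range ℓ, γ i := by
        refine Finset.sum_congr rfl fun i hi => ?_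
        have : i < ℓ := Finset.mem_range.mp hi
        simp [this]
      rw [this]
      simp only [lt_irrefl, if_neg (lt_irrefl ℓ)]
      rw [← add_assoc, h3]
      exact hbg
  · rw [Finset.sum_range_succ]
    have : ∑ i ∈ Finset.range ℓ, (if i < ℓ then γ i else g) = ∑ i ∈ Finset.range ℓ, γ i := by
      refine Finset.sum_congr rfl fun i hi => ?_
      have : i < ℓ := Finset.mem_range.mp hi
      simp [this]
    rw [this, if_neg (lt_irrefl ℓ), ← add_assoc, h3]

private lemma gc_rev {V : Type*} [NormedAddCommGroup V] [InnerProductSpace ℝ V]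
    {Δ : Finset V} {H₀ a b : V} (hneg : ∀ g ∈ Δ, -g ∈ Δ) (ha : a ∈ Δ)
    (h : GoodChain Δ H₀ a b) : GoodChain Δ H₀ b a := by
  obtain ⟨ℓ, γ, h1, h2, h3⟩ := h
  have key : ∀ r, r ≤ ℓ →
      b + ∑ i ∈ Finset.range r, (-γ (ℓ - 1 - i)) = a + ∑ i ∈ Finset.range (ℓ - r), γ i := by
    intro r
    induction r with
    | zero => intro _; simpa using h3.symm
    | succ r ih =>
      intro hr
      have hr' : r ≤ ℓ := by omega
      rw [Finset.sum_range_succ, ← add_assoc, ih hr']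
      have h4 : ℓ - r = (ℓ - (r + 1)) + 1 := by omega
      have h5 : ℓ - 1 - r = ℓ - (r + 1) := by omega
      rw [h4, Finset.sum_range_succ, h5]
      abel
  refine ⟨ℓ, fun i => -γ (ℓ - 1 - i), ?_, ?_, ?_⟩
  · intro i hi
    have h6 : ℓ - 1 - i < ℓ := by omega
    obtain ⟨hγΔ, hγ0⟩ := h1 _ h6
    exact ⟨hneg _ hγΔ, by simp [hγ0]⟩
  · intro r hr1 hr2
    rw [key r hr2]
    rcases Nat.eq_or_lt_of_le hr2 with h | h
    · have : ℓ - r = 0 := by omega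
      simpa [this] using ha
    · exact h2 (ℓ - r) (by omega) (by omega)
  · rw [key ℓ le_rfl]
    simp

private lemma key1 {V : Type*} [NormedAddCommGroup V] [InnerProductSpace ℝ V]
    {Δ : Finset V} (hΔ0 : (0 : V) ∉ Δ)
    (hrefl : ∀ α ∈ Δ, ∀ β ∈ Δ, β - (2 * ⟪β, α⟫ / ⟪α, α⟫) • α ∈ Δ)
    (hcrys : ∀ α ∈ Δ, ∀ β ∈ Δ, ∃ m : ℤ, 2 * ⟪β, α⟫ / ⟪α, α⟫ = (m : ℝ))
    {a g : V} (ha : a ∈ Δ) (hg : g ∈ Δ) (hip : 0 < ⟪a, g⟫) :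
    a = g ∨ a - g ∈ Δ := by
  have hposx : ∀ x : V, x ≠ 0 → (0:ℝ) < ⟪x, x⟫ := fun x hx =>
    lt_of_le_of_ne real_inner_self_nonneg (Ne.symm (inner_self_ne_zero.mpr hx))
  have hgg : (0:ℝ) < ⟪g, g⟫ := hposx g (by rintro rfl; exact hΔ0 hg)
  have haa : (0:ℝ) < ⟪a, a⟫ := hposx a (by rintro rfl; exact hΔ0 ha)
  obtain ⟨m, hm⟩ := hcrys g hg a ha
  obtain ⟨n, hn⟩ := hcrys a ha g hg
  have hm' : 2 * ⟪a, g⟫ = (m : ℝ) * ⟪g, g⟫ := by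
    field_simp at hm; linarith [hm]
  have hn' : 2 * ⟪g, a⟫ = (n : ℝ) * ⟪a, a⟫ := by
    field_simp at hn; linarith [hn]
  have hag : ⟪g, a⟫ = ⟪a, g⟫ := real_inner_comm a g
  have hm1 : 1 ≤ m := by
    have h0 : (0:ℝ) < (m:ℝ) := by
      by_contra h
      push_neg at h
      nlinarith
    have : 0 < m := by exact_mod_cast h0
    omega
  have hn1 : 1 ≤ n := by
    have h0 : (0:ℝ) < (n:ℝ) := by
      by_contra h
      push_neg at h
      nlinarith [hag]
    have : 0 < n := by exact_mod_cast h0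
    omega
  by_cases hm2 : m = 1
  · right
    have h := hrefl g hg a ha
    rw [hm, hm2] at h
    simpa using h
  by_cases hn2 : n = 1
  · rcases eq_or_ne a g with h | h
    · exact Or.inl h
    right
    have hga : g - a ∈ Δ := by
      have h' := hrefl a ha g hg
      rw [hn, hn2] at h'
      simpa using h'
    have hd0 : g - a ≠ 0 := sub_ne_zero.mpr (Ne.symm h)
    have hdd : (0:ℝ) < ⟪g - a, g - a⟫ := hposx _ hd0
    have h'' := hrefl (g - a) hga (g - a) hga
    have hcoef : 2 * ⟪g - a, g - a⟫ / ⟪g - a, g - a⟫ = (2:ℝ) := by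
      field_simp
    rw [hcoef] at h''
    have : g - a - (2:ℝ) • (g - a) = a - g := by module
    rwa [this] at h''
  -- m ≥ 2 and n ≥ 2
  have hm2' : 2 ≤ m := by omega
  have hn2' : 2 ≤ n := by omega
  have hcs := real_inner_mul_inner_self_le a g
  have hmn : (m : ℝ) * (n : ℝ) ≤ 4 := by
    have h1 : (m:ℝ) * n * (⟪g,g⟫ * ⟪a,a⟫) = 4 * (⟪a,g⟫ * ⟪a,g⟫) := by
      have := hm'
      have := hn'
      nlinarith [hm', hn', hag]
    nlinarith [mul_pos hgg haa, hcs]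
  have hmn' : m * n ≤ 4 := by exact_mod_cast hmn
  have hm4 : m = 2 := by nlinarith
  have hn4 : n = 2 := by nlinarith
  left
  have e1 : 2 * ⟪a, g⟫ = 2 * ⟪g, g⟫ := by rw [hm', hm4]; push_cast; ring
  have e2 : 2 * ⟪g, a⟫ = 2 * ⟪a, a⟫ := by rw [hn', hn4]; push_cast; ring
  have : ⟪a - g, a - g⟫ = 0 := by
    rw [inner_sub_sub_self]
    linarith [hag]
  have := inner_self_eq_zero.mp this
  exact sub_eq_zero.mp this
set_option maxHeartbeats 2000000 in
/-- Chains of roots (Proposition on good sequences of roots).  Let `Δ` be a finite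
(possibly non-reduced) crystallographic root system in a finite-dimensional real inner
product space `V`, fix `H₀ ∈ V`, let `A = ⋂_{α ∈ Δ⁰} α^⊥` where
`Δ⁰ = {α ∈ Δ : ⟨α, H₀⟩ = 0}`, and let `π_A` be the orthogonal projection onto `A`.
If `α₁, α₂ ∈ Δ` have the same nonzero projection on `A`, then `α₂` can be reached from
`α₁` by successively adding roots of `Δ⁰`, staying inside `Δ` at every step. -/
theorem stmt12 {V : Type*} [NormedAddCommGroup V] [InnerProductSpace ℝ V]
    [FiniteDimensional ℝ V]
    (Δ : Finset V) (hΔ0 : (0 : V) ∉ Δ)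
    (hrefl : ∀ α ∈ Δ, ∀ β ∈ Δ, β - (2 * ⟪β, α⟫ / ⟪α, α⟫) • α ∈ Δ)
    (hcrys : ∀ α ∈ Δ, ∀ β ∈ Δ, ∃ m : ℤ, 2 * ⟪β, α⟫ / ⟪α, α⟫ = (m : ℝ))
    (H₀ : V) (A : Submodule ℝ V)
    (hA : A = ⨅ α ∈ {a : V | a ∈ Δ ∧ ⟪a, H₀⟫ = 0}, (Submodule.span ℝ {α})ᗮ)
    (α₁ α₂ : V) (h₁ : α₁ ∈ Δ) (h₂ : α₂ ∈ Δ)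
    (hproj : A.orthogonalProjectionOnto α₁ = A.orthogonalProjectionOnto α₂)
    (hne : (A.orthogonalProjectionOnto α₁ : V) ≠ 0) :
    ∃ (ℓ : ℕ) (γ : ℕ → V),
      (∀ i < ℓ, γ i ∈ Δ ∧ ⟪γ i, H₀⟫ = 0) ∧
      (∀ r : ℕ, 1 ≤ r → r ≤ ℓ → α₁ + ∑ i ∈ Finset.range r, γ i ∈ Δ) ∧
      α₁ + ∑ i ∈ Finset.range ℓ, γ i = α₂ := by
  classical
  have hposx : ∀ x : V, x ≠ 0 → (0:ℝ) < ⟪x, x⟫ := fun x hx =>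
    lt_of_le_of_ne real_inner_self_nonneg (Ne.symm (inner_self_ne_zero.mpr hx))
  have hneΔ0 : ∀ g ∈ Δ, g ≠ (0:V) := fun g hg h => hΔ0 (h ▸ hg)
  have hneg : ∀ g ∈ Δ, -g ∈ Δ := by
    intro g hg
    have h := hrefl g hg g hg
    have hgg : (0:ℝ) < ⟪g, g⟫ := hposx g (hneΔ0 g hg)
    have hc : 2 * ⟪g, g⟫ / ⟪g, g⟫ = (2:ℝ) := by field_simp
    rw [hc] at h
    have : g - (2:ℝ) • g = -g := by module
    rwa [this] at h
  -- H₀ ∈ A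
  have hH0A : H₀ ∈ A := by
    rw [hA]
    simp only [Submodule.mem_iInf]
    intro g hg
    rw [Submodule.mem_orthogonal]
    intro u hu
    obtain ⟨c, rfl⟩ := Submodule.mem_span_singleton.mp hu
    rw [real_inner_smul_left, hg.2, mul_zero]
  -- membership of A implies orthogonal to Δ⁰ roots
  have hAo : ∀ x ∈ A, ∀ g ∈ Δ, ⟪g, H₀⟫ = 0 → ⟪g, x⟫ = 0 := by
    intro x hx g hg hg0
    rw [hA] at hx
    simp only [Submodule.mem_iInf] at hx
    have := hx g ⟨hg, hg0⟩
    rw [Submodule.mem_orthogonal] at this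
    exact this g (Submodule.mem_span_singleton_self g)
  -- Δ⁰ roots lie in Aᗮ
  have hΔ0A : ∀ g ∈ Δ, ⟪g, H₀⟫ = 0 → g ∈ Aᗮ := by
    intro g hg hg0
    rw [Submodule.mem_orthogonal]
    intro u hu
    rw [real_inner_comm]
    exact hAo u hu g hg hg0
  have hPg0 : ∀ g ∈ Δ, ⟪g, H₀⟫ = 0 → (A.orthogonalProjectionOnto g : V) = 0 := by
    intro g hg hg0
    rw [Submodule.orthogonalProjectionOnto_eq_zero_iff.mpr (hΔ0A g hg hg0)]
    simp
  -- the Cp predicate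
  have hCpP : ∀ δ : V, GoodChain Δ H₀ α₂ δ →
      (A.orthogonalProjectionOnto δ : V) = (A.orthogonalProjectionOnto α₂ : V) := by
    rintro δ ⟨ℓ, γ, hone, _, h3⟩
    rw [← h3, map_add, map_sum]
    push_cast
    have : ∀ i ∈ Finset.range ℓ, (A.orthogonalProjectionOnto (γ i) : V) = 0 := by
      intro i hi
      have hi' := Finset.mem_range.mp hi
      exact hPg0 (γ i) (hone i hi').1 (hone i hi').2
    rw [Finset.sum_congr rfl this]
    simp
  have hproj' : (A.orthogonalProjectionOnto α₁ : V) = (A.orthogonalProjectionOnto α₂ : V) := by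
    rw [hproj]
  have hne2 : (A.orthogonalProjectionOnto α₂ : V) ≠ 0 := by rwa [hproj'] at hne
  -- Cp δ := δ ∈ Δ ∧ GoodChain
  set Cp : V → Prop := fun δ => δ ∈ Δ ∧ GoodChain Δ H₀ α₂ δ with hCpdef
  have hCp2 : Cp α₂ := ⟨h₂, gc_refl Δ H₀ α₂⟩
  have hCpne : ∀ δ, Cp δ → (A.orthogonalProjectionOnto δ : V) ≠ 0 := by
    intro δ hδ
    rw [hCpP δ hδ.2]
    exact hne2
  have hstep : ∀ δ, Cp δ → ∀ g ∈ Δ, ⟪g, H₀⟫ = 0 → δ + g ∈ Δ → Cp (δ + g) :=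
    fun δ hδ g hg hg0 hδg => ⟨hδg, gc_step hδ.2 hg hg0 hδg⟩
  have hnotparallel : ∀ δ, Cp δ → ∀ g ∈ Δ, ⟪g, H₀⟫ = 0 → ∀ c : ℝ, δ ≠ c • g := by
    intro δ hδ g hg hg0 c h
    apply hCpne δ hδ
    rw [h, map_smul]
    push_cast
    rw [hPg0 g hg hg0]
    simp
  -- key2 : closure under subtracting m • g for nonneg integer m matching the Cartan number
  have key2 : ∀ k : ℕ, ∀ m : ℕ, m ≤ k → ∀ δ, Cp δ → ∀ g ∈ Δ, ⟪g, H₀⟫ = 0 →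
      2 * ⟪δ, g⟫ / ⟪g, g⟫ = (m : ℝ) → Cp (δ - (m : ℝ) • g) := by
    intro k
    induction k with
    | zero =>
      intro m hm δ hδ g hgΔ hg0 hcoef
      have : m = 0 := by omega
      subst this
      simpa using hδ
    | succ k ih =>
      intro m hm δ hδ g hgΔ hg0 hcoef
      have hgg : (0:ℝ) < ⟪g, g⟫ := hposx g (hneΔ0 g hgΔ)
      have hcoef' : 2 * ⟪δ, g⟫ = (m : ℝ) * ⟪g, g⟫ := by
        field_simp at hcoef; linarith
      match m, hcoef, hcoef' with
      | 0, hcoef, hcoef' => simpa using hδ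
      | 1, hcoef, hcoef' =>
        have hip : 0 < ⟪δ, g⟫ := by push_cast at hcoef'; nlinarith
        rcases key1 hΔ0 hrefl hcrys hδ.1 hgΔ hip with h | h
        · exact absurd h (hnotparallel δ hδ g hgΔ hg0 1 ∘ (by simpa using ·))
        · have := hstep δ hδ (-g) (hneg g hgΔ) (by rw [inner_neg_left, hg0, neg_zero])
            (by rwa [← sub_eq_add_neg])
          rw [← sub_eq_add_neg] at this
          simpa using this
      | (m+2), hcoef, hcoef' =>
        have hip : 0 < ⟪δ, g⟫ := by push_cast at hcoef'; nlinarith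
        have hδg : δ - g ∈ Δ := by
          rcases key1 hΔ0 hrefl hcrys hδ.1 hgΔ hip with h | h
          · exact absurd h (hnotparallel δ hδ g hgΔ hg0 1 ∘ (by simpa using ·))
          · exact h
        have hCpδg : Cp (δ - g) := by
          have := hstep δ hδ (-g) (hneg g hgΔ) (by rw [inner_neg_left, hg0, neg_zero])
            (by rwa [← sub_eq_add_neg])
          rwa [← sub_eq_add_neg] at this
        have hcoef2 : 2 * ⟪δ - g, g⟫ / ⟪g, g⟫ = ((m : ℕ) : ℝ) := by
          rw [inner_sub_left]
          push_cast at hcoef' ⊢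
          field_simp
          linarith
        have hmid := ih m (by omega) (δ - g) hCpδg g hgΔ hg0 hcoef2
        -- hmid : Cp (δ - g - m • g)
        have hSΔ : δ - (((m:ℕ) + 2 : ℕ) : ℝ) • g ∈ Δ := by
          have h := hrefl g hgΔ δ hδ.1
          rw [hcoef] at h
          convert h using 2
        have hfin := hstep _ hmid (-g) (hneg g hgΔ)
          (by rw [inner_neg_left, hg0, neg_zero])
          (by
            have : δ - g - (m : ℝ) • g + -g = δ - (((m:ℕ) + 2 : ℕ) : ℝ) • g := by
              push_cast; module
            rwa [this])
        have : δ - g - (m : ℝ) • g + -g = δ - (((m:ℕ) + 2 : ℕ) : ℝ) • g := by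
          push_cast; module
        rwa [this] at hfin
  -- key3 : closure under the reflection s_g
  have key3 : ∀ δ, Cp δ → ∀ g ∈ Δ, ⟪g, H₀⟫ = 0 →
      Cp (δ - (2 * ⟪δ, g⟫ / ⟪g, g⟫) • g) := by
    intro δ hδ g hgΔ hg0
    obtain ⟨m, hm⟩ := hcrys g hgΔ δ hδ.1
    rcases le_or_gt 0 m with h | h
    · have hc : 2 * ⟪δ, g⟫ / ⟪g, g⟫ = ((m.toNat : ℕ) : ℝ) := by
        rw [hm]; exact_mod_cast (Int.toNat_of_nonneg h).symm
      have := key2 m.toNat m.toNat le_rfl δ hδ g hgΔ hg0 hc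
      rwa [← hc] at this
    · have hgΔ' := hneg g hgΔ
      have hg0' : ⟪-g, H₀⟫ = 0 := by rw [inner_neg_left, hg0, neg_zero]
      have h4 : (((-m).toNat : ℕ) : ℝ) = -(m : ℝ) := by
        exact_mod_cast Int.toNat_of_nonneg (by omega : (0:ℤ) ≤ -m)
      have hc : 2 * ⟪δ, -g⟫ / ⟪-g, -g⟫ = (((-m).toNat : ℕ) : ℝ) := by
        rw [inner_neg_right, inner_neg_neg, h4, ← hm]
        ring
      have hres := key2 (-m).toNat (-m).toNat le_rfl δ hδ (-g) hgΔ' hg0' hc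
      have heq : δ - (((-m).toNat : ℕ) : ℝ) • (-g) = δ - (2 * ⟪δ, g⟫ / ⟪g, g⟫) • g := by
        rw [h4, hm]
        module
      rwa [heq] at hres
  -- the finite set R of reachable roots
  set R : Finset V := Δ.filter (fun δ => GoodChain Δ H₀ α₂ δ) with hRdef
  have hmemR : ∀ δ, δ ∈ R ↔ Cp δ := by
    intro δ
    rw [hRdef, Finset.mem_filter]
  have hα₂R : α₂ ∈ R := (hmemR α₂).mpr hCp2
  -- the sum over R is fixed by every reflection s_g, g ∈ Δ⁰
  have hSg : ∀ g ∈ Δ, ⟪g, H₀⟫ = 0 → ⟪∑ δ ∈ R, δ, g⟫ = 0 := by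
    intro g hgΔ hg0
    have hgg : (0:ℝ) < ⟪g, g⟫ := hposx g (hneΔ0 g hgΔ)
    have hinv : ∀ δ : V, (δ - (2 * ⟪δ, g⟫ / ⟪g, g⟫) • g) -
        (2 * ⟪δ - (2 * ⟪δ, g⟫ / ⟪g, g⟫) • g, g⟫ / ⟪g, g⟫) • g = δ := by
      intro δ
      rw [inner_sub_left, real_inner_smul_left]
      have hc : 2 * (⟪δ, g⟫ - 2 * ⟪δ, g⟫ / ⟪g, g⟫ * ⟪g, g⟫) / ⟪g, g⟫
          = -(2 * ⟪δ, g⟫ / ⟪g, g⟫) := by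
        field_simp
        ring
      rw [hc]
      module
    have hbij : ∑ δ ∈ R, (δ - (2 * ⟪δ, g⟫ / ⟪g, g⟫) • g) = ∑ δ ∈ R, δ := by
      refine Finset.sum_nbij' (fun δ => δ - (2 * ⟪δ, g⟫ / ⟪g, g⟫) • g)
        (fun δ => δ - (2 * ⟪δ, g⟫ / ⟪g, g⟫) • g) ?_ ?_ ?_ ?_ ?_
      · intro δ hδ
        exact (hmemR _).mpr (key3 δ ((hmemR δ).mp hδ) g hgΔ hg0)
      · intro δ hδ
        exact (hmemR _).mpr (key3 δ ((hmemR δ).mp hδ) g hgΔ hg0)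
      · intro δ _; exact hinv δ
      · intro δ _; exact hinv δ
      · intro δ _; rfl
    rw [Finset.sum_sub_distrib] at hbij
    have h0 : ∑ δ ∈ R, (2 * ⟪δ, g⟫ / ⟪g, g⟫) • g = 0 := by
      have := sub_eq_self.mp hbij -- wrong orientation maybe
      exact this
    rw [← Finset.sum_smul] at h0
    rcases smul_eq_zero.mp h0 with h | h
    · have hsum : ∑ δ ∈ R, ⟪δ, g⟫ = 0 := by
        have h2 : (2 / ⟪g, g⟫) * ∑ δ ∈ R, ⟪δ, g⟫ = 0 := by
          rw [Finset.mul_sum]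
          rw [← h]
          refine Finset.sum_congr rfl fun δ _ => by ring
        rcases mul_eq_zero.mp h2 with h3 | h3
        · exact absurd h3 (by positivity)
        · exact h3
      rw [sum_inner]
      exact hsum
    · exact absurd h (hneΔ0 g hgΔ)
  -- hence the sum lies in A
  have hSA : (∑ δ ∈ R, δ) ∈ A := by
    rw [hA]
    simp only [Submodule.mem_iInf]
    intro g hg
    rw [Submodule.mem_orthogonal]
    intro u hu
    obtain ⟨c, rfl⟩ := Submodule.mem_span_singleton.mp hu
    rw [real_inner_smul_left, real_inner_comm, hSg g hg.1 hg.2, mul_zero]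
  -- conclude α₁ is reachable
  have hCp1 : Cp α₁ := by
    by_contra hfin
    have hle : ∀ δ ∈ R, ⟪α₁, δ⟫ ≤ 0 := by
      intro δ hδR
      by_contra hpos
      push_neg at hpos
      have hδCp := (hmemR δ).mp hδR
      rcases key1 hΔ0 hrefl hcrys h₁ hδCp.1 hpos with h | h
      · exact hfin (h ▸ hδCp)
      · have hb0 : ⟪α₁ - δ, H₀⟫ = 0 := by
          have hP : (A.orthogonalProjectionOnto (α₁ - δ) : V) = 0 := by
            rw [map_sub]
            push_cast
            rw [hCpP δ hδCp.2, hproj']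
            simp
          have hmem : α₁ - δ ∈ Aᗮ := by
            have := A.sub_starProjection_mem_orthogonal (α₁ - δ)
            rw [Submodule.starProjection_apply] at this
            rwa [hP, sub_zero] at this
          rw [real_inner_comm]
          exact Submodule.inner_right_of_mem_orthogonal hH0A hmem
        have := hstep δ hδCp (α₁ - δ) h hb0 (by simpa using h₁)
        simp only [add_sub_cancel] at this
        exact hfin this
    have hsum_le : ⟪α₁, ∑ δ ∈ R, δ⟫ ≤ 0 := by
      rw [inner_sum]
      exact Finset.sum_nonpos hle
    have hsum_pos : (0:ℝ) < ⟪α₁, ∑ δ ∈ R, δ⟫ := by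
      have hA1 : ⟪α₁, ∑ δ ∈ R, δ⟫ = ⟪(A.orthogonalProjectionOnto α₁ : V), ∑ δ ∈ R, δ⟫ := by
        have h0 := A.starProjection_inner_eq_zero α₁ (∑ δ ∈ R, δ) hSA
        rw [Submodule.starProjection_apply] at h0
        rw [inner_sub_left] at h0
        linarith
      rw [hA1, inner_sum]
      have heach : ∀ δ ∈ R, ⟪(A.orthogonalProjectionOnto α₁ : V), δ⟫
          = ⟪(A.orthogonalProjectionOnto α₁ : V), (A.orthogonalProjectionOnto α₁ : V)⟫ := by
        intro δ hδ
        have hδCp := (hmemR δ).mp hδ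
        have hPδ : (A.orthogonalProjectionOnto δ : V) = (A.orthogonalProjectionOnto α₁ : V) := by
          rw [hCpP δ hδCp.2, hproj']
        have horth : ⟪(A.orthogonalProjectionOnto α₁ : V), δ - A.orthogonalProjectionOnto δ⟫ = 0 :=
          Submodule.inner_right_of_mem_orthogonal (A.orthogonalProjectionOnto α₁).2
            (by simpa only [Submodule.starProjection_apply] using A.sub_starProjection_mem_orthogonal δ)
        have : ⟪(A.orthogonalProjectionOnto α₁ : V), δ⟫
            = ⟪(A.orthogonalProjectionOnto α₁ : V), (A.orthogonalProjectionOnto δ : V)⟫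
              + ⟪(A.orthogonalProjectionOnto α₁ : V), δ - A.orthogonalProjectionOnto δ⟫ := by
          rw [← inner_add_right]
          congr 1
          abel
        rw [this, horth, add_zero, hPδ]
      rw [Finset.sum_congr rfl heach, Finset.sum_const, nsmul_eq_mul]
      have hp : (0:ℝ) < ⟪(A.orthogonalProjectionOnto α₁ : V), (A.orthogonalProjectionOnto α₁ : V)⟫ :=
        hposx _ hne
      have hcard : 0 < R.card := Finset.card_pos.mpr ⟨α₂, hα₂R⟩
      have hcard' : (0:ℝ) < (R.card : ℝ) := by exact_mod_cast hcard
      exact mul_pos hcard' hp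
    linarith
  -- reverse the chain
  exact gc_rev hneg h₂ hCp1.2
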